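/- Root verification for the outage equation: suppose C_th > 0, β = (e^{C_th} − 1)/SNR₀, the inner radicand satisfies β L² − β² L² d₀² + 1 ≥ 0, and Q + Θ ≥ 0 where Q = β(L² − 4 d₀²) and Θ = 4·√(β L² − β² L² d₀² + 1) + 4. Then with Φ = √((Q + Θ)/β), both times T₁ = (L + Φ)/(2v) and T₂ = (L − Φ)/(2v) satisfy f(T, L) = e^{C_th}, i.e. C(T) = C_th. -/

import Mathlib

/-- Root verification for the outage equation of the two-antenna system.
With `f t L = 1 + SNR₀/(d₀² + (v t)²) + SNR₀/(d₀² + (L − v t)²)`,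
`C t = ln f(t, L)`, `β = (e^{C_th} − 1)/SNR₀`, `Q = β(L² − 4 d₀²)`,
`Θ = 4·√(β L² − β² L² d₀² + 1) + 4` and `Φ = √((Q + Θ)/β)`: if `C_th > 0`,
the inner radicand is nonnegative and `Q + Θ ≥ 0`, then both
`T₁ = (L + Φ)/(2v)` and `T₂ = (L − Φ)/(2v)` satisfy `f(T, L) = e^{C_th}`,
i.e. `C T = C_th`. -/
theorem two_antenna_outage_roots
    (SNR₀ d₀ v L : ℝ) (hSNR : 0 < SNR₀) (hd₀ : 0 < d₀) (hv : 0 < v) (hL : 0 < L)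
    (f : ℝ → ℝ → ℝ)
    (hf : ∀ t L', f t L' =
      1 + SNR₀ / (d₀ ^ 2 + (v * t) ^ 2) + SNR₀ / (d₀ ^ 2 + (L' - v * t) ^ 2))
    (C : ℝ → ℝ) (hC : ∀ t, C t = Real.log (f t L))
    (Cth β Q Θ Φ : ℝ) (hCth : 0 < Cth)
    (hβ : β = (Real.exp Cth - 1) / SNR₀)
    (hQ : Q = β * (L ^ 2 - 4 * d₀ ^ 2))
    (hΘ : Θ = 4 * Real.sqrt (β * L ^ 2 - β ^ 2 * L ^ 2 * d₀ ^ 2 + 1) + 4)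
    (hΦ : Φ = Real.sqrt ((Q + Θ) / β))
    (hrad : 0 ≤ β * L ^ 2 - β ^ 2 * L ^ 2 * d₀ ^ 2 + 1)
    (hQΘ : 0 ≤ Q + Θ) :
    (f ((L + Φ) / (2 * v)) L = Real.exp Cth ∧ C ((L + Φ) / (2 * v)) = Cth) ∧
    (f ((L - Φ) / (2 * v)) L = Real.exp Cth ∧ C ((L - Φ) / (2 * v)) = Cth) := by

  have hE1 : 1 < Real.exp Cth := by
    calc (1:ℝ) = Real.exp 0 := (Real.exp_zero).symm
    _ < Real.exp Cth := Real.exp_lt_exp.mpr hCth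
  have hβpos : 0 < β := by rw [hβ]; exact div_pos (by linarith) hSNR
  set s := Real.sqrt (β * L ^ 2 - β ^ 2 * L ^ 2 * d₀ ^ 2 + 1) with hs
  have hs2 : s ^ 2 = β * L ^ 2 - β ^ 2 * L ^ 2 * d₀ ^ 2 + 1 := Real.sq_sqrt hrad
  have hΦ2 : Φ ^ 2 = (Q + Θ) / β := by
    rw [hΦ]; exact Real.sq_sqrt (div_nonneg hQΘ hβpos.le)
  have hR : β * Φ ^ 2 = β * L ^ 2 - 4 * β * d₀ ^ 2 + 4 * s + 4 := by
    rw [hΦ2, mul_div_cancel₀ _ (ne_of_gt hβpos), hQ, hΘ]; ring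
  have hda : (0:ℝ) < d₀ ^ 2 + ((L + Φ) / 2) ^ 2 := by positivity
  have hdb : (0:ℝ) < d₀ ^ 2 + ((L - Φ) / 2) ^ 2 := by positivity
  have key2 : β * ((d₀ ^ 2 + ((L + Φ) / 2) ^ 2) + (d₀ ^ 2 + ((L - Φ) / 2) ^ 2)) =
      β * (β * ((d₀ ^ 2 + ((L + Φ) / 2) ^ 2) * (d₀ ^ 2 + ((L - Φ) / 2) ^ 2))) := by
    linear_combination ((-8 * s - (β * Φ ^ 2 - (β * L ^ 2 - 4 * β * d₀ ^ 2 + 4 * s + 4))) / 16) * hR - hs2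
  have key2' := mul_left_cancel₀ (ne_of_gt hβpos) key2
  have key : SNR₀ / (d₀ ^ 2 + ((L + Φ) / 2) ^ 2) + SNR₀ / (d₀ ^ 2 + ((L - Φ) / 2) ^ 2)
      = Real.exp Cth - 1 := by
    have hexp : Real.exp Cth - 1 = β * SNR₀ := by
      rw [hβ]; field_simp
    rw [hexp]
    field_simp
    linear_combination 16 * key2'
  have hv' : v ≠ 0 := ne_of_gt hv
  have hx1 : v * ((L + Φ) / (2 * v)) = (L + Φ) / 2 := by field_simp
  have hx2 : v * ((L - Φ) / (2 * v)) = (L - Φ) / 2 := by field_simp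
  have hy1 : L - (L + Φ) / 2 = (L - Φ) / 2 := by ring
  have hy2 : L - (L - Φ) / 2 = (L + Φ) / 2 := by ring
  have hf1 : f ((L + Φ) / (2 * v)) L = Real.exp Cth := by
    rw [hf, hx1, hy1]; linarith [key]
  have hf2 : f ((L - Φ) / (2 * v)) L = Real.exp Cth := by
    rw [hf, hx2, hy2]; linarith [key]
  refine ⟨⟨hf1, ?_⟩, ⟨hf2, ?_⟩⟩ <;> rw [hC]
  · rw [hf1, Real.log_exp]
  · rw [hf2, Real.log_exp]
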